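/- Let G(z) = Σ_{i=0}^{δ} G_i z^i ∈ 𝔽_q[z]^{1×n} with G_δ ≠ 0 and n ≥ δ + 1. If the (δ+1) × n matrix Φ₁(G) whose rows are G₀, G₁, …, G_δ is superregular, then the 1D convolutional code generated by G(z) has free distance equal to n(δ+1), i.e., every nonzero codeword u(z)G(z) with u(z) ∈ 𝔽_q[z] \ {0} has weight at least n(δ+1). -/

import Mathlib

/-- A family of row vectors is *superregular* if every square submatrix, obtained by
selecting rows and columns injectively, has nonzero determinant; equivalently all
minors of all sizes are nonzero. -/
def SuperregularFamily {F ι κ : Type*} [CommRing F] (M : ι → κ → F) : Prop :=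
  ∀ (t : ℕ) (r : Fin t → ι) (c : Fin t → κ),
    Function.Injective r → Function.Injective c →
      Matrix.det (Matrix.of fun a b => M (r a) (c b)) ≠ 0

/-- The weight of a vector of univariate polynomials: the total number of nonzero
field coefficients over all components and all degrees. -/
def wtP {F : Type*} [Semiring F] {n : ℕ} (w : Fin n → Polynomial F) : ℕ :=
  ∑ j, (w j).support.card


open Finset Polynomial


open scoped Classical

/-- A nonzero combination of the rows of a superregular matrix, using `s` nonzero
coefficients, can vanish in fewer than `s` columns. -/
lemma sr_row_bound {F : Type*} [Field F] {m n : ℕ} (Φ : Fin m → Fin n → F)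
    (hsr : SuperregularFamily Φ) (x : Fin m → F) (hx : x ≠ 0) :
    (Finset.univ.filter fun j => ∑ i, x i * Φ i j = 0).card <
      (Finset.univ.filter fun i => x i ≠ 0).card := by
  classical
  by_contra hcon
  push_neg at hcon
  set S := Finset.univ.filter fun i => x i ≠ 0 with hS
  set Z := Finset.univ.filter fun j => ∑ i, x i * Φ i j = 0 with hZ
  obtain ⟨Z', hZ'sub, hZ'card⟩ := Finset.exists_subset_card_eq hcon
  set e := S.equivFin with he
  set f := Z'.equivFinOfCardEq hZ'card with hf
  set r : Fin S.card → Fin m := fun a => (e.symm a : Fin m) with hr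
  set c : Fin S.card → Fin n := fun b => (f.symm b : Fin n) with hc
  have hrinj : Function.Injective r := fun a b h => e.symm.injective (Subtype.ext h)
  have hcinj : Function.Injective c := fun a b h => f.symm.injective (Subtype.ext h)
  have hdet := hsr S.card r c hrinj hcinj
  set M : Matrix (Fin S.card) (Fin S.card) F := Matrix.of fun a b => Φ (r a) (c b) with hM
  set y : Fin S.card → F := fun a => x (r a) with hy
  have hy0 : Matrix.vecMul y M = 0 := by
    funext b
    have h1 : ∑ a, y a * M a b = ∑ i ∈ S, x i * Φ i (c b) := by
      rw [← Finset.sum_attach S (fun i => x i * Φ i (c b))]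
      exact Fintype.sum_equiv e.symm _ _ (fun a => rfl)
    have h2 : ∑ i ∈ S, x i * Φ i (c b) = ∑ i, x i * Φ i (c b) := by
      apply Finset.sum_subset (Finset.subset_univ S)
      intro i _ hiS
      have : ¬ x i ≠ 0 := by simpa [hS] using hiS
      simp [not_not.mp this]
    have h3 : ∑ i, x i * Φ i (c b) = 0 := by
      have : c b ∈ Z := hZ'sub (f.symm b).2
      simpa [hZ] using this
    show ∑ a, y a * M a b = 0
    calc ∑ a, y a * M a b = ∑ i ∈ S, x i * Φ i (c b) := h1
      _ = 0 := h2.trans h3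
  have hMunit : IsUnit M.det := isUnit_iff_ne_zero.mpr hdet
  have hy_eq : y = 0 := by
    have := congrArg (fun v => Matrix.vecMul v M⁻¹) hy0
    simpa [Matrix.vecMul_vecMul, Matrix.mul_nonsing_inv M hMunit, Matrix.vecMul_one,
      Matrix.zero_vecMul] using this
  obtain ⟨i₀, hi₀⟩ := Function.ne_iff.mp hx
  have hi₀' : x i₀ ≠ 0 := by simpa using hi₀
  have hi₀S : i₀ ∈ S := by simp [hS, hi₀']
  have : y (e ⟨i₀, hi₀S⟩) = x i₀ := by
    simp [hy, hr]
  rw [hy_eq] at this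
  exact hi₀' (by simpa using this.symm)


lemma coeff_formula {F : Type*} [CommRing F] {δ : ℕ} (u p : Polynomial F)
    (hp : p.natDegree ≤ δ) (t : ℕ) :
    (u * p).coeff t = ∑ i : Fin (δ + 1),
      (if (i : ℕ) ≤ t then u.coeff (t - i) else 0) * p.coeff i := by
  rw [mul_comm, Polynomial.coeff_mul, Finset.Nat.sum_antidiagonal_eq_sum_range_succ_mk,
    Fin.sum_univ_eq_sum_range (fun i => (if i ≤ t then u.coeff (t - i) else 0) * p.coeff i) (δ+1)]
  simp only []
  have key : ∀ N, t + 1 ≤ N → δ + 1 ≤ N →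
      ∑ k ∈ range (t+1), p.coeff k * u.coeff (t - k)
        = ∑ i ∈ range (δ+1), (if i ≤ t then u.coeff (t - i) else 0) * p.coeff i := by
    intro N hN1 hN2
    have hL : ∑ k ∈ range (t+1), p.coeff k * u.coeff (t - k)
        = ∑ i ∈ range N, (if i ≤ t then u.coeff (t - i) else 0) * p.coeff i := by
      have e1 : ∑ k ∈ range (t+1), p.coeff k * u.coeff (t - k)
          = ∑ k ∈ range (t+1), (if k ≤ t then u.coeff (t - k) else 0) * p.coeff k := by
        apply Finset.sum_congr rfl
        intro k hk
        rw [if_pos (Nat.lt_succ_iff.mp (Finset.mem_range.mp hk)), mul_comm]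
      rw [e1]
      apply Finset.sum_subset (Finset.range_subset_range.mpr hN1)
      intro i _ hi
      rw [if_neg (fun h => hi (Finset.mem_range.mpr (Nat.lt_succ_of_le h)))]
      ring
    have hR : ∑ i ∈ range (δ+1), (if i ≤ t then u.coeff (t - i) else 0) * p.coeff i
        = ∑ i ∈ range N, (if i ≤ t then u.coeff (t - i) else 0) * p.coeff i := by
      apply Finset.sum_subset (Finset.range_subset_range.mpr hN2)
      intro i _ hi
      have : δ < i := by
        by_contra h
        exact hi (Finset.mem_range.mpr (Nat.lt_succ_of_le (not_lt.mp h)))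
      rw [Polynomial.coeff_eq_zero_of_natDegree_lt (lt_of_le_of_lt hp this), mul_zero]
    rw [hL, hR]
  exact key (max (t+1) (δ+1)) (le_max_left _ _) (le_max_right _ _)

/-- Let `G(z) = Σ_{i=0}^{δ} G_i z^i ∈ 𝔽_q[z]^{1×n}` with `G_δ ≠ 0`
and `n ≥ δ + 1`. If the `(δ+1)×n` matrix `Φ₁(G)` stacking the coefficient vectors
`G₀,…,G_δ` is superregular, then every nonzero codeword `u(z)·G(z)` has weight at
least `n(δ+1)`; i.e. the 1D convolutional code generated by `G(z)` is MDS with free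
distance `n(δ+1)`. -/
theorem oneD_MDS_of_superregular {F : Type*} [Field F] [Fintype F] {n δ : ℕ}
    (hn : δ + 1 ≤ n) (g : Fin n → Polynomial F)
    (hdeg : ∀ j, (g j).natDegree ≤ δ)
    (htop : ∃ j, (g j).coeff δ ≠ 0)
    (hsr : SuperregularFamily fun (t : Fin (δ + 1)) (j : Fin n) => (g j).coeff t) :
    ∀ u : Polynomial F, u ≠ 0 → n * (δ + 1) ≤ wtP (fun j => u * g j) := by
  intro u hu
  classical
  set d := u.natDegree with hd
  set T := Finset.range (d + δ + 1) with hT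
  set Φ : Fin (δ+1) → Fin n → F := fun i j => (g j).coeff i with hΦ
  set X : ℕ → Fin (δ+1) → F := fun t i => if (i:ℕ) ≤ t then u.coeff (t - i) else 0 with hX
  have hcoeff : ∀ (j : Fin n) (t : ℕ), (u * g j).coeff t = ∑ i : Fin (δ+1), X t i * Φ i j :=
    fun j t => coeff_formula u (g j) (hdeg j) t
  set W : ℕ → ℕ := fun t => (Finset.univ.filter fun j : Fin n => (u * g j).coeff t ≠ 0).card with hW
  set s : ℕ → ℕ := fun t => (Finset.univ.filter fun i : Fin (δ+1) => X t i ≠ 0).card with hs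
  -- supports live in T
  have hsupp : ∀ j, (u * g j).support ⊆ T := by
    intro j t ht
    have h1 : t ≤ (u * g j).natDegree := le_natDegree_of_ne_zero (mem_support_iff.mp ht)
    have h2 : (u * g j).natDegree ≤ d + δ :=
      le_trans (natDegree_mul_le) (by have := hdeg j; omega)
    exact Finset.mem_range.mpr (by omega)
  -- rewrite the weight as a sum over degrees
  have hwt : wtP (fun j => u * g j) = ∑ t ∈ T, W t := by
    unfold wtP
    have h1 : ∀ j : Fin n, (u * g j).support.card
        = (T.filter fun t => (u * g j).coeff t ≠ 0).card := by
      intro j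
      congr 1
      ext a
      simp only [Finset.mem_filter, mem_support_iff]
      constructor
      · intro ha; exact ⟨hsupp j (mem_support_iff.mpr ha), ha⟩
      · exact fun ha => ha.2
    calc ∑ j, (u * g j).support.card
        = ∑ j : Fin n, ∑ t ∈ T, (if (u * g j).coeff t ≠ 0 then 1 else 0) := by
          refine Finset.sum_congr rfl fun j _ => ?_
          rw [h1 j, Finset.card_filter]
      _ = ∑ t ∈ T, ∑ j : Fin n, (if (u * g j).coeff t ≠ 0 then 1 else 0) := Finset.sum_comm
      _ = ∑ t ∈ T, W t := by
          exact Finset.sum_congr rfl fun t _ => (Finset.card_filter _ _).symm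
  -- the set of degrees where the coefficient window is nonzero
  set A : Finset ℕ := u.support ∪ (Finset.Icc 1 δ).image (fun i => d + i) with hA
  have hud : u.coeff d ≠ 0 := by
    rw [hd, ← Polynomial.leadingCoeff]
    exact Polynomial.leadingCoeff_ne_zero.mpr hu
  have hAx : ∀ t ∈ A, X t ≠ 0 := by
    intro t ht h0
    rcases Finset.mem_union.mp ht with h | h
    · have : X t ⟨0, Nat.succ_pos δ⟩ = u.coeff t := by
        show (if (0:ℕ) ≤ t then u.coeff (t - 0) else 0) = u.coeff t
        rw [if_pos (Nat.zero_le t), Nat.sub_zero]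
      rw [h0] at this
      exact mem_support_iff.mp h (by simpa using this.symm)
    · obtain ⟨i, hi, rfl⟩ := Finset.mem_image.mp h
      have hi' : 1 ≤ i ∧ i ≤ δ := Finset.mem_Icc.mp hi
      have : X (d + i) ⟨i, by omega⟩ = u.coeff d := by
        show (if i ≤ d + i then u.coeff (d + i - i) else 0) = u.coeff d
        rw [if_pos (Nat.le_add_left i d)]
        congr 1
        omega
      rw [h0] at this
      exact hud (by simpa using this.symm)
  have hAT : A ⊆ T := by
    intro t ht
    rcases Finset.mem_union.mp ht with h | h
    · have : t ≤ d := le_natDegree_of_ne_zero (mem_support_iff.mp h)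
      exact Finset.mem_range.mpr (by omega)
    · obtain ⟨i, hi, rfl⟩ := Finset.mem_image.mp h
      have hi' : 1 ≤ i ∧ i ≤ δ := Finset.mem_Icc.mp hi
      exact Finset.mem_range.mpr (by omega)
  have hAcard : A.card = u.support.card + δ := by
    rw [hA, Finset.card_union_of_disjoint, Finset.card_image_of_injective _
      (fun a b h => by omega), Nat.card_Icc]
    · omega
    · rw [Finset.disjoint_left]
      intro t ht h
      obtain ⟨i, hi, rfl⟩ := Finset.mem_image.mp h
      have hi' : 1 ≤ i ∧ i ≤ δ := Finset.mem_Icc.mp hi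
      have : d + i ≤ d := le_natDegree_of_ne_zero (mem_support_iff.mp ht)
      omega
  -- per-degree bound from superregularity
  have hrow : ∀ t ∈ A, n + 1 ≤ W t + s t := by
    intro t ht
    have hzlt := sr_row_bound Φ hsr (X t) (hAx t ht)
    have hfe : (Finset.univ.filter fun j : Fin n => ∑ i, X t i * Φ i j = 0)
        = (Finset.univ.filter fun j : Fin n => (u * g j).coeff t = 0) := by
      apply Finset.filter_congr
      intro j _
      rw [hcoeff j t]
    rw [hfe] at hzlt
    have hsplit : (Finset.univ.filter fun j : Fin n => (u * g j).coeff t = 0).card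
        + (Finset.univ.filter fun j : Fin n => ¬ (u * g j).coeff t = 0).card = n := by
      rw [Finset.card_filter_add_card_filter_not]
      simp
    have h1 : W t = (Finset.univ.filter fun j : Fin n => ¬ (u * g j).coeff t = 0).card := rfl
    have h2 : s t = (Finset.univ.filter fun i : Fin (δ+1) => X t i ≠ 0).card := rfl
    omega
  -- total window-weight bound
  have hsum_s : ∑ t ∈ T, s t ≤ (δ + 1) * u.support.card := by
    have h1 : ∑ t ∈ T, s t
        = ∑ i : Fin (δ+1), ∑ t ∈ T, (if X t i ≠ 0 then 1 else 0) := by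
      rw [Finset.sum_comm]
      exact Finset.sum_congr rfl fun t _ => Finset.card_filter _ _
    rw [h1]
    have h2 : ∀ i : Fin (δ+1), ∑ t ∈ T, (if X t i ≠ 0 then 1 else 0) ≤ u.support.card := by
      intro i
      rw [← Finset.card_filter]
      apply Finset.card_le_card_of_injOn (fun t => t - (i:ℕ))
      · intro t ht
        have hX' : X t i ≠ 0 := (Finset.mem_filter.mp ht).2
        by_cases hit : (i:ℕ) ≤ t
        · have : u.coeff (t - i) ≠ 0 := by simpa [hX, if_pos hit] using hX'
          exact mem_support_iff.mpr this
        · exact absurd (by simp [hX, if_neg hit]) hX'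
      · intro a ha b hb hab
        have hXa : X a i ≠ 0 := (Finset.mem_filter.mp ha).2
        have hXb : X b i ≠ 0 := (Finset.mem_filter.mp hb).2
        have hia : (i:ℕ) ≤ a := by
          by_contra h; exact hXa (by simp [hX, if_neg h])
        have hib : (i:ℕ) ≤ b := by
          by_contra h; exact hXb (by simp [hX, if_neg h])
        simp only at hab
        omega
    calc ∑ i : Fin (δ+1), ∑ t ∈ T, (if X t i ≠ 0 then 1 else 0)
        ≤ ∑ _i : Fin (δ+1), u.support.card := Finset.sum_le_sum (fun i _ => h2 i)
      _ = (δ + 1) * u.support.card := by simp [mul_comm]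
  -- put everything together
  set w := u.support.card with hw
  have hw1 : 1 ≤ w := Finset.card_pos.mpr (nonempty_support_iff.mpr hu)
  have hmain : (w + δ) * (n + 1) ≤ (∑ t ∈ A, W t) + (δ + 1) * w := by
    have h1 : ∑ t ∈ A, (n + 1) ≤ ∑ t ∈ A, (W t + s t) :=
      Finset.sum_le_sum hrow
    rw [Finset.sum_const, smul_eq_mul, hAcard] at h1
    have h2 : ∑ t ∈ A, s t ≤ (δ + 1) * w := by
      refine le_trans (Finset.sum_le_sum_of_subset hAT) hsum_s
    rw [Finset.sum_add_distrib] at h1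
    omega
  have hWA : ∑ t ∈ A, W t ≤ ∑ t ∈ T, W t := Finset.sum_le_sum_of_subset hAT
  rw [hwt]
  obtain ⟨w', hw'⟩ : ∃ w', w = w' + 1 := ⟨w - 1, by omega⟩
  rw [hw'] at hmain
  have hkey : w' * δ ≤ w' * n := Nat.mul_le_mul_left w' (by omega)
  nlinarith [hmain, hWA, hkey]
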